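/- (Freshness of transaction sequence numbers, formal content of Lemma 1.) In the Byzcuit object transition system, suppose a transaction with transaction sequence number sT is aborted at the object, i.e., the execution contains the step Step (Locked T sT) (abort T sT) (Active (sT + 1)). Then every lock step occurring later in the execution carries a strictly larger sequence number: if Active (sT + 1) →* Active s'' and Step (Active s'') (lock T' sT') (Locked T' sT'), then sT' ≥ sT + 1 > sT. Consequently, a pre-recorded message whose sequence number is at most sT can never again pass the freshness check required to lock the object. -/
import Mathlib


/-- States of the life cycle of a single Byzcuit object. -/
inductive ObjState : Type where
  | Active : ℕ → ObjState
  | Locked : ℕ → ℕ → ObjState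
  | Inactive : ℕ → ObjState
deriving DecidableEq

/-- Labels of the transitions: lock, commit and abort, each carrying a
transaction `T` and a transaction sequence number `sT`. -/
inductive Label : Type where
  | lock : ℕ → ℕ → Label
  | commit : ℕ → ℕ → Label
  | abort : ℕ → ℕ → Label
deriving DecidableEq

/-- The step relation of the Byzcuit object transition system, generated by
exactly three rules. -/
inductive Step : ObjState → Label → ObjState → Prop where
  | lock {s T sT : ℕ} (h : sT ≥ s) :
      Step (.Active s) (.lock T sT) (.Locked T sT)
  | commit {T sT : ℕ} :
      Step (.Locked T sT) (.commit T sT) (.Inactive T)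
  | abort {T sT : ℕ} :
      Step (.Locked T sT) (.abort T sT) (.Active (sT + 1))

/-- Reachability by zero or more steps (labels existentially quantified). -/
inductive Reach : ObjState → ObjState → Prop where
  | refl (σ : ObjState) : Reach σ σ
  | tail {σ σ' σ'' : ObjState} (h : Reach σ σ') (ℓ : Label)
      (hs : Step σ' ℓ σ'') : Reach σ σ''

theorem reach_active_mono {n : ℕ} {σ : ObjState} (h : Reach (.Active n) σ) :
    (∀ s, σ = .Active s → s ≥ n) ∧ (∀ T s, σ = .Locked T s → s ≥ n) := by
  induction h with
  | refl =>
    refine ⟨?_, ?_⟩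
    · intro s h; injection h with h; omega
    · intro T s h; cases h
  | tail h ℓ hs ih =>
    cases hs with
    | lock hle =>
      refine ⟨?_, ?_⟩
      · intro s h; cases h
      · intro T s h; injection h with _ h; subst h; exact le_trans (ih.1 _ rfl) hle
    | commit =>
      refine ⟨?_, ?_⟩
      · intro s h; cases h
      · intro T s h; cases h
    | abort =>
      refine ⟨?_, ?_⟩
      · intro s h; injection h with h
        have := ih.2 _ _ rfl; omega
      · intro T s h; cases h

/-- **Freshness of transaction sequence numbers (Lemma 1).** If the execution
contains the abort step of a transaction with sequence number `sT`, then every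
lock step occurring later carries a strictly larger sequence number:
`sT' ≥ sT + 1 > sT`. -/
theorem fresh_seq_after_abort (T sT : ℕ)
    (habort : Step (.Locked T sT) (.abort T sT) (.Active (sT + 1))) :
    ∀ (s'' T' sT' : ℕ),
      Reach (.Active (sT + 1)) (.Active s'') →
      Step (.Active s'') (.lock T' sT') (.Locked T' sT') →
      sT' ≥ sT + 1 ∧ sT + 1 > sT := by
  intro s'' T' sT' hreach hstep
  cases hstep with
  | lock hle => exact ⟨le_trans ((reach_active_mono hreach).1 _ rfl) hle, Nat.lt_succ_self _⟩
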